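/- Let n ≥ 2, k > 0, m ≥ 2 even, and ξ ∈ ℝ^n with ξ ≠ 0 and |ξ| ≤ (m+1)k. Let e_1 = ξ/|ξ|, e_2 a unit vector orthogonal to e_1, and Ξ = √(m²k² − (|ξ|−k)²). Define ζ_0 = k e_1, and for j = 1,...,m, ζ_j = (1/m)((|ξ|−k) e_1 + Ξ e_2) if j is odd, ζ_j = (1/m)((|ξ|−k) e_1 − Ξ e_2) if j is even. Then ζ_j · ζ_j = k² for all j = 0,1,...,m and ζ_0 + ζ_1 + ... + ζ_m = ξ. -/

import Mathlib

open scoped RealInnerProductSpace BigOperators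

lemma alt_sum_key {V : Type*} [AddCommMonoid V] (A B : V) (t : ℕ) :
    ∑ i ∈ Finset.range (2 * t), (if Even i then A else B) = t • (A + B) := by
  induction t with
  | zero => simp
  | succ t ih =>
      have : 2 * (t + 1) = (2 * t + 1) + 1 := by ring
      rw [this, Finset.sum_range_succ, Finset.sum_range_succ, ih]
      have h1 : Even (2 * t) := even_two_mul t
      have h2 : ¬ Even (2 * t + 1) := by simp [Nat.even_add_one, h1]
      rw [if_pos h1, if_neg h2, succ_nsmul]
      abel

theorem wave_vectors_even_m (n m : ℕ) (hn : 2 ≤ n) (hm : 2 ≤ m) (hmeven : Even m)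
    (k : ℝ) (hk : 0 < k) (ξ e₂ : EuclideanSpace ℝ (Fin n))
    (hξ : ξ ≠ 0) (hle : ‖ξ‖ ≤ ((m : ℝ) + 1) * k)
    (he₂ : ‖e₂‖ = 1) (horth : (inner ℝ (‖ξ‖⁻¹ • ξ) e₂ : ℝ) = 0) :
    let e₁ : EuclideanSpace ℝ (Fin n) := ‖ξ‖⁻¹ • ξ
    let Ξ : ℝ := Real.sqrt ((m : ℝ) ^ 2 * k ^ 2 - (‖ξ‖ - k) ^ 2)
    let ζ : Fin (m + 1) → EuclideanSpace ℝ (Fin n) := fun j =>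
      if (j : ℕ) = 0 then k • e₁
      else if Odd (j : ℕ) then ((m : ℝ))⁻¹ • ((‖ξ‖ - k) • e₁ + Ξ • e₂)
      else ((m : ℝ))⁻¹ • ((‖ξ‖ - k) • e₁ - Ξ • e₂)
    (∀ j : Fin (m + 1), (inner ℝ (ζ j) (ζ j) : ℝ) = k ^ 2) ∧ (∑ j, ζ j = ξ) := by
  intro e₁ Ξ ζ
  have hξn : (0:ℝ) < ‖ξ‖ := norm_pos_iff.mpr hξ
  have he₁ : ‖e₁‖ = 1 := by
    simp [e₁, norm_smul, abs_of_pos (inv_pos.mpr hξn), inv_mul_cancel₀ hξn.ne']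
  have h11 : (inner ℝ e₁ e₁ : ℝ) = 1 := by
    rw [real_inner_self_eq_norm_sq, he₁]; norm_num
  have h22 : (inner ℝ e₂ e₂ : ℝ) = 1 := by
    rw [real_inner_self_eq_norm_sq, he₂]; norm_num
  have h12 : (inner ℝ e₁ e₂ : ℝ) = 0 := horth
  have h21 : (inner ℝ e₂ e₁ : ℝ) = 0 := by rw [real_inner_comm]; exact horth
  have hm2 : (2:ℝ) ≤ (m:ℝ) := by exact_mod_cast hm
  have hm0 : (m:ℝ) ≠ 0 := by linarith
  have hnn : 0 ≤ (m : ℝ) ^ 2 * k ^ 2 - (‖ξ‖ - k) ^ 2 := by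
    have h1 : 0 ≤ (m:ℝ)*k - (‖ξ‖ - k) := by nlinarith
    have h2 : 0 ≤ (m:ℝ)*k + (‖ξ‖ - k) := by nlinarith
    nlinarith [mul_nonneg h1 h2]
  have hΞ : Ξ ^ 2 = (m : ℝ) ^ 2 * k ^ 2 - (‖ξ‖ - k) ^ 2 := Real.sq_sqrt hnn
  constructor
  · intro j
    by_cases h0 : (j : ℕ) = 0
    · have hz : ζ j = k • e₁ := by simp only [ζ, h0, ↓reduceIte]
      rw [hz, real_inner_smul_left, real_inner_smul_right, h11]; ring
    · by_cases hodd : Odd (j : ℕ)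
      · simp only [ζ, if_neg h0, if_pos hodd]
        simp only [inner_add_left, inner_add_right, real_inner_smul_left,
          real_inner_smul_right, h11, h22, h12, h21]
        field_simp
        nlinarith [hΞ]
      · simp only [ζ, if_neg h0, if_neg hodd]
        simp only [inner_sub_left, inner_sub_right, inner_add_left, inner_add_right,
          real_inner_smul_left, real_inner_smul_right, h11, h22, h12, h21]
        field_simp
        nlinarith [hΞ]
  · set A : EuclideanSpace ℝ (Fin n) := ((m : ℝ))⁻¹ • ((‖ξ‖ - k) • e₁ + Ξ • e₂) with hA
    set B : EuclideanSpace ℝ (Fin n) := ((m : ℝ))⁻¹ • ((‖ξ‖ - k) • e₁ - Ξ • e₂) with hB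
    obtain ⟨t, ht⟩ := hmeven
    have hmt : m = 2 * t := by omega
    have hg : ∑ j, ζ j = ∑ i ∈ Finset.range (m + 1),
        (fun i : ℕ => if i = 0 then k • e₁ else if Odd i then A else B) i := by
      rw [← Fin.sum_univ_eq_sum_range]
    rw [hg, Finset.sum_range_succ']
    have hstep : ∀ i : ℕ, (if i + 1 = 0 then k • e₁ else if Odd (i+1) then A else B)
        = (if Even i then A else B) := by
      intro i
      by_cases h : Even i
      · simp [h, Nat.odd_add_one]
      · simp [h, Nat.odd_add_one]
    rw [Finset.sum_congr rfl (fun i _ => hstep i), hmt, alt_sum_key,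
      if_pos (rfl : (0:ℕ) = 0)]
    have ht0 : 0 < t := by omega
    have htR : ((t : ℝ)) = (m : ℝ) / 2 := by
      rw [hmt]; push_cast; ring
    rw [← Nat.cast_smul_eq_nsmul ℝ]
    have hAB : A + B = ((2 : ℝ) / m) • ((‖ξ‖ - k) • e₁) := by
      rw [hA, hB]
      match_scalars <;> field_simp <;> ring
    rw [hAB, smul_smul, htR]
    have : (m : ℝ) / 2 * (2 / m) = 1 := by field_simp
    rw [this, one_smul]
    have h2 : (‖ξ‖ - k) • e₁ + (k : ℝ) • e₁ = ‖ξ‖ • e₁ := by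
      rw [← add_smul]; ring_nf
    rw [h2]
    show ‖ξ‖ • ‖ξ‖⁻¹ • ξ = ξ
    rw [smul_smul, mul_inv_cancel₀ hξn.ne', one_smul]
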